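/- Four positive real numbers u₁, u₂, u₃, u₄ are, respectively, the two side lengths and the two diagonal lengths of some nondegenerate parallelogram in the Euclidean plane if and only if they satisfy the equation u₃² + u₄² = 2u₁² + 2u₂² and the two inequalities u₃ < u₁ + u₂ and u₄ < u₁ + u₂. -/

import Mathlib

private lemma collinear_of_smul {A E F : EuclideanSpace ℝ (Fin 2)}
    (r : ℝ) (h : F - E = r • (A - E)) :
    Collinear ℝ ({A, E, F} : Set (EuclideanSpace ℝ (Fin 2))) := by
  rw [collinear_iff_of_mem (Set.mem_insert_of_mem _ (Set.mem_insert _ _))]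
  refine ⟨A - E, ?_⟩
  intro p hp
  rcases hp with rfl | rfl | rfl
  · exact ⟨1, by simp⟩
  · exact ⟨0, by simp⟩
  · exact ⟨r, by rw [← h]; simp⟩

/-- Characterization of side and diagonal lengths of a nondegenerate parallelogram
via the parallelogram equation and the two upper bounds `u₃ < u₁ + u₂`, `u₄ < u₁ + u₂`. -/
theorem parallelogram_characterization_upper
    (u₁ u₂ u₃ u₄ : ℝ) (h₁ : 0 < u₁) (h₂ : 0 < u₂) (h₃ : 0 < u₃) (h₄ : 0 < u₄) :
    (∃ A B F E : EuclideanSpace ℝ (Fin 2),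
        B - A = F - E ∧
        ¬ Collinear ℝ ({A, E, F} : Set (EuclideanSpace ℝ (Fin 2))) ∧
        dist A E = u₁ ∧ dist E F = u₂ ∧ dist A F = u₃ ∧ dist E B = u₄) ↔
      (u₃ ^ 2 + u₄ ^ 2 = 2 * u₁ ^ 2 + 2 * u₂ ^ 2 ∧ u₃ < u₁ + u₂ ∧ u₄ < u₁ + u₂) := by
  constructor
  · rintro ⟨A, B, F, E, hBA, hncol, hAE, hEF, hAF, hEB⟩
    set x := A - E with hx
    set y := F - E with hy
    have hxn : ‖x‖ = u₁ := by rw [hx, ← dist_eq_norm]; exact hAE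
    have hyn : ‖y‖ = u₂ := by rw [hy, ← dist_eq_norm, dist_comm]; exact hEF
    have hx0 : x ≠ 0 := by intro h; rw [h, norm_zero] at hxn; exact h₁.ne hxn
    have hy0 : y ≠ 0 := by intro h; rw [h, norm_zero] at hyn; exact h₂.ne hyn
    have hsub : ‖x - y‖ = u₃ := by
      rw [← hAF, dist_eq_norm]; congr 1; rw [hx, hy]; abel
    have hadd : ‖x + y‖ = u₄ := by
      rw [← hEB, dist_eq_norm, ← norm_neg]
      congr 1
      have : B = y + A := by rw [← hBA]; abel
      rw [this, hx, hy]; abel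
    have hnsr1 : ¬ SameRay ℝ x y := by
      intro hsr
      obtain ⟨r, _, hr⟩ := hsr.exists_nonneg_left hx0
      exact hncol (collinear_of_smul r (by rw [← hx, ← hy, ← hr]))
    have hnsr2 : ¬ SameRay ℝ x (-y) := by
      intro hsr
      obtain ⟨r, _, hr⟩ := hsr.exists_nonneg_left hx0
      refine hncol (collinear_of_smul (-r) ?_)
      rw [← hx, ← hy, neg_smul, hr, neg_neg]
    have hlt1 : u₃ < u₁ + u₂ := by
      rw [← hxn, ← hyn, ← hsub, sub_eq_add_neg, ← norm_neg y]
      exact norm_add_lt_of_not_sameRay hnsr2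
    have hlt2 : u₄ < u₁ + u₂ := by
      rw [← hxn, ← hyn, ← hadd]
      exact norm_add_lt_of_not_sameRay hnsr1
    refine ⟨?_, hlt1, hlt2⟩
    have := parallelogram_law_with_norm ℝ x y
    rw [hadd, hsub, hxn, hyn] at this
    nlinarith [this]
  · rintro ⟨heq, hlt3, hlt4⟩
    set c : ℝ := (u₁ ^ 2 + u₂ ^ 2 - u₃ ^ 2) / (2 * u₁ * u₂) with hc
    have h2u : (0:ℝ) < 2 * u₁ * u₂ := by positivity
    have hc1 : c < 1 := by
      rw [hc, div_lt_one h2u]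
      nlinarith [sq_nonneg (u₁ - u₂), h₄.le, hlt4, sq_nonneg (u₁ + u₂ - u₄)]
    have hcm1 : -1 < c := by
      rw [hc, lt_div_iff₀ h2u]
      nlinarith [sq_nonneg (u₁ + u₂ - u₃)]
    have hc2 : c ^ 2 < 1 := by nlinarith
    set s : ℝ := Real.sqrt (1 - c ^ 2) with hs
    have hs0 : 0 < s := Real.sqrt_pos.2 (by linarith)
    have hs2 : s ^ 2 = 1 - c ^ 2 := Real.sq_sqrt (by linarith)
    have hccond : u₁ ^ 2 + u₂ ^ 2 - 2 * u₁ * u₂ * c = u₃ ^ 2 := by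
      rw [hc]; field_simp; ring
    set v : (Fin 2 → ℝ) → EuclideanSpace ℝ (Fin 2) := fun p => (WithLp.equiv 2 _).symm p with hv
    refine ⟨v ![u₁, 0], v ![u₁ + u₂ * c, u₂ * s], v ![u₂ * c, u₂ * s], v ![0, 0],
      ?_, ?_, ?_, ?_, ?_, ?_⟩
    · apply (WithLp.equiv 2 _).injective
      ext i
      fin_cases i <;> simp [hv] <;> ring
    · intro hcol
      rw [collinear_iff_of_mem (Set.mem_insert_of_mem _ (Set.mem_insert _ _))] at hcol
      obtain ⟨w, hw⟩ := hcol
      obtain ⟨r₁, hr₁⟩ := hw _ (Set.mem_insert _ _)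
      obtain ⟨r₂, hr₂⟩ := hw _ (Set.mem_insert_of_mem _ (Set.mem_insert_of_mem _ rfl))
      have e1 : ∀ i, v ![u₁, 0] i = r₁ • w i + v ![0,0] i := by
        intro i; rw [hr₁]; rfl
      have e2 : ∀ i, v ![u₂ * c, u₂ * s] i = r₂ • w i + v ![0,0] i := by
        intro i; rw [hr₂]; rfl
      have a0 := e1 0; have a1 := e1 1; have b0 := e2 0; have b1 := e2 1
      simp [hv] at a0 a1 b0 b1
      rcases a1 with h | h
      · rw [h] at a0; simp at a0; exact h₁.ne' a0
      · rw [h] at b1; simp at b1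
        rcases b1 with h' | h'
        · rw [h'] at b0; simp at b0
          nlinarith [mul_pos h₂ hs0]
        · exact absurd h' (by positivity)
    · have key : dist (v ![u₁, 0]) (v ![0, 0]) = Real.sqrt (u₁ ^ 2) := by
        rw [EuclideanSpace.dist_eq]; congr 1
        simp only [hv, Fin.sum_univ_two, Real.dist_eq, WithLp.equiv_symm_apply, PiLp.toLp_apply,
          Matrix.cons_val_zero, Matrix.cons_val_one, Matrix.head_cons, sq_abs]
        ring
      rw [key, Real.sqrt_sq h₁.le]
    · have key : dist (v ![0, 0]) (v ![u₂ * c, u₂ * s]) = Real.sqrt (u₂ ^ 2) := by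
        rw [EuclideanSpace.dist_eq]; congr 1
        simp only [hv, Fin.sum_univ_two, Real.dist_eq, WithLp.equiv_symm_apply, PiLp.toLp_apply,
          Matrix.cons_val_zero, Matrix.cons_val_one, Matrix.head_cons, sq_abs]
        linear_combination u₂ ^ 2 * hs2
      rw [key, Real.sqrt_sq h₂.le]
    · have key : dist (v ![u₁, 0]) (v ![u₂ * c, u₂ * s]) = Real.sqrt (u₃ ^ 2) := by
        rw [EuclideanSpace.dist_eq]; congr 1
        simp only [hv, Fin.sum_univ_two, Real.dist_eq, WithLp.equiv_symm_apply, PiLp.toLp_apply,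
          Matrix.cons_val_zero, Matrix.cons_val_one, Matrix.head_cons, sq_abs]
        linear_combination u₂ ^ 2 * hs2 + hccond
      rw [key, Real.sqrt_sq h₃.le]
    · have key : dist (v ![0, 0]) (v ![u₁ + u₂ * c, u₂ * s]) = Real.sqrt (u₄ ^ 2) := by
        rw [EuclideanSpace.dist_eq]; congr 1
        simp only [hv, Fin.sum_univ_two, Real.dist_eq, WithLp.equiv_symm_apply, PiLp.toLp_apply,
          Matrix.cons_val_zero, Matrix.cons_val_one, Matrix.head_cons, sq_abs]
        linear_combination u₂ ^ 2 * hs2 - hccond - heq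
      rw [key, Real.sqrt_sq h₄.le]
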